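/- arXiv:2204.12465 — 2 statements merged into one kernel-verified Lean document; each statement's English description precedes it below -/
import Mathlib

section
/- For each 0 < ε₁, ε₂ < 1 there exists d₀ = d₀(ε₁, ε₂) such that the following holds for every n ≥ d ≥ d₀ and every x ≥ 1. Let G be an n-vertex (ε₁, ε₂·d)-expander with minimum degree δ(G) ≥ d − 1. Let A, B ⊆ V(G) with |A|, |B| ≥ x, and let W ⊆ V(G)∖(A ∪ B) satisfy |W| ≤ ε₁·x / (4·log²(15n/(ε₂d))). Then there is an A,B-path in G − W of length at most (100/ε₁)·log³(15n/(ε₂d)). -/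
open scoped BigOperators

/-- The average degree of a graph `G`: `(1/|G|) * sum of degrees`. -/
noncomputable def avgDeg {V : Type*} (G : SimpleGraph V) : Real :=
  (finsum fun v : V => ((G.neighborSet v).ncard : Real)) / (Nat.card V : Real)

/-- The function `eps(x, eps1, k)` from the definition of robust sublinear expanders. -/
noncomputable def epsFun (eps1 k x : Real) : Real :=
  if x < k / 5 then 0 else eps1 / (Real.log (15 * x / k)) ^ 2

/-- The external neighbourhood of a vertex set `X` in a graph `H`. -/
def extNbr {V : Type*} (H : SimpleGraph V) (X : Set V) : Set V :=
  {w : V | w ∉ X ∧ ∃ v ∈ X, H.Adj v w}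

/-- `G` is an `(eps1, k)`-robust-expander. -/
def IsExpander {V : Type*} (G : SimpleGraph V) (eps1 k : Real) : Prop :=
  ∀ X : Set V, k / 2 ≤ (X.ncard : Real) → (X.ncard : Real) ≤ (Nat.card V : Real) / 2 →
    ∀ F : SimpleGraph V, F ≤ G →
      (F.edgeSet.ncard : Real) ≤ avgDeg G * epsFun eps1 k (X.ncard) * (X.ncard : Real) →
      epsFun eps1 k (X.ncard) * (X.ncard : Real) ≤ ((extNbr (G \ F) X).ncard : Real)

/-- The minimum degree of `G` is at least `d`. -/
def minDegGe {V : Type*} (G : SimpleGraph V) (d : Real) : Prop :=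
  ∀ v : V, d ≤ ((G.neighborSet v).ncard : Real)

namespace Stmt4Aux

variable {V : Type} (G : SimpleGraph V) (W A : Set V)

/-- Ball of radius `i` around `A` in `G`, avoiding `W` outside `A`. -/
def ball : ℕ → Set V
  | 0 => A
  | (i+1) => ball i ∪ {w | w ∉ W ∧ ∃ v ∈ ball i, G.Adj v w}

lemma ball_subset_succ (i : ℕ) : ball G W A i ⊆ ball G W A (i+1) :=
  Set.subset_union_left

lemma subset_ball (i : ℕ) : A ⊆ ball G W A i := by
  induction i with
  | zero => exact subset_rfl
  | succ i ih => exact ih.trans (ball_subset_succ G W A i)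

lemma ball_reach (hAW : ∀ a ∈ A, a ∉ W) (i : ℕ) (v : V) (hv : v ∈ ball G W A i) :
    ∃ a ∈ A, ∃ p : G.Walk a v, p.length ≤ i ∧ ∀ y ∈ p.support, y ∉ W := by
  induction i generalizing v with
  | zero =>
    exact ⟨v, hv, SimpleGraph.Walk.nil, by simp, by
      intro y hy
      simp only [SimpleGraph.Walk.support_nil, List.mem_singleton] at hy
      rw [hy]; exact hAW v hv⟩
  | succ i ih =>
    rcases hv with hv | ⟨hvW, u, hu, hadj⟩
    · obtain ⟨a, ha, p, hl, hs⟩ := ih v hv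
      exact ⟨a, ha, p, hl.trans (Nat.le_succ i), hs⟩
    · obtain ⟨a, ha, p, hl, hs⟩ := ih u hu
      refine ⟨a, ha, p.concat hadj, ?_, ?_⟩
      · rw [SimpleGraph.Walk.length_concat]; omega
      · intro y hy
        rw [SimpleGraph.Walk.support_concat, List.mem_append] at hy
        rcases hy with hy | hy
        · exact hs y hy
        · simp only [List.mem_singleton] at hy; rw [hy]; exact hvW

lemma ncard_ball_succ [Fintype V] (i : ℕ) :
    ((ball G W A i).ncard : ℝ) + ((extNbr G (ball G W A i)).ncard : ℝ) ≤
      ((ball G W A (i+1)).ncard : ℝ) + (W.ncard : ℝ) := by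
  set X := ball G W A i with hX
  set N := extNbr G X with hN
  set D := N \ W with hD
  have hDX : Disjoint X D := by
    rw [Set.disjoint_right]
    intro w hw
    exact fun hx => hw.1.1 hx
  have hsub : X ∪ D ⊆ ball G W A (i+1) := by
    intro w hw
    rcases hw with hw | hw
    · exact ball_subset_succ G W A i hw
    · exact Set.mem_union_right _ ⟨hw.2, hw.1.2⟩
  have h1 : X.ncard + D.ncard ≤ (ball G W A (i+1)).ncard := by
    rw [← Set.ncard_union_eq hDX (Set.toFinite _) (Set.toFinite _)]
    exact Set.ncard_le_ncard hsub (Set.toFinite _)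
  have h2 : N.ncard ≤ D.ncard + W.ncard := by
    calc N.ncard ≤ (D ∪ W).ncard :=
          Set.ncard_le_ncard (fun w hw => by
            by_cases hwW : w ∈ W
            · exact Set.mem_union_right _ hwW
            · exact Set.mem_union_left _ ⟨hw, hwW⟩) (Set.toFinite _)
      _ ≤ D.ncard + W.ncard := Set.ncard_union_le _ _
  have : X.ncard + N.ncard ≤ (ball G W A (i+1)).ncard + W.ncard := by omega
  exact_mod_cast this

lemma exp_half_le {c : ℝ} (hc : 0 < c) (hc1 : c ≤ 1) : Real.exp (c/2) ≤ 1 + c := by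
  have h1 : 0 < 1 - c/2 := by linarith
  have h2 : 1 - c/2 ≤ Real.exp (-(c/2)) := by
    have := Real.add_one_le_exp (-(c/2)); linarith
  have h3 : Real.exp (c/2) ≤ (1 - c/2)⁻¹ := by
    have h5 := inv_anti₀ h1 h2
    rwa [Real.exp_neg, inv_inv] at h5
  have h4 : (1 - c/2)⁻¹ ≤ 1 + c := by
    rw [inv_eq_one_div, div_le_iff₀ h1]; nlinarith
  linarith

end Stmt4Aux

open Stmt4Aux in
set_option maxHeartbeats 1600000 in
theorem statement_4 (eps1 eps2 : Real)
    (heps1 : 0 < eps1) (heps1' : eps1 < 1) (heps2 : 0 < eps2) (heps2' : eps2 < 1) :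
    ∃ d₀ : Real, ∀ (V : Type) [Fintype V] (G : SimpleGraph V) (n : Nat) (d x : Real),
      Nat.card V = n → d₀ ≤ d → d ≤ (n : Real) → 1 ≤ x →
      IsExpander G eps1 (eps2 * d) → minDegGe G (d - 1) →
      ∀ A B W : Set V, x ≤ (A.ncard : Real) → x ≤ (B.ncard : Real) →
        W ⊆ (A ∪ B)ᶜ →
        (W.ncard : Real) ≤ eps1 * x / (4 * (Real.log (15 * n / (eps2 * d))) ^ 2) →
        ∃ (a b : V) (p : G.Walk a b), a ∈ A ∧ b ∈ B ∧ p.IsPath ∧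
          (∀ y ∈ p.support, y ∉ W) ∧
          (∀ y ∈ p.support, y ∈ A ∪ B → y = a ∨ y = b) ∧
          (p.length : Real) ≤ (100 / eps1) * (Real.log (15 * n / (eps2 * d))) ^ 3 := by
  refine ⟨1, ?_⟩
  intro V _ G n d x hn hd hdn hx hExp hMin A B W hA hB hWAB hW
  classical
  set k : ℝ := eps2 * d with hk_def
  set L : ℝ := Real.log (15 * n / (eps2 * d)) with hL_def
  have hd0 : (1:ℝ) ≤ d := hd
  have hdpos : (0:ℝ) < d := by linarith
  have hkpos : 0 < k := by rw [hk_def]; positivity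
  have hkd : k ≤ d := by rw [hk_def]; nlinarith
  have hn1 : (1:ℝ) ≤ n := le_trans hd0 hdn
  have hnpos : (0:ℝ) < n := by linarith
  have hxpos : (0:ℝ) < x := by linarith
  have harg : (15:ℝ) ≤ 15 * n / k := by
    rw [le_div_iff₀ hkpos]; nlinarith
  have hL2 : 2 < L := by
    have he : Real.exp 2 < 15 := by
      have h1 : Real.exp 1 < 2.7182818286 := Real.exp_one_lt_d9
      have h2 : Real.exp 2 = Real.exp 1 * Real.exp 1 := by
        rw [← Real.exp_add]; norm_num
      nlinarith [Real.exp_pos 1]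
    have h15 : (2:ℝ) < Real.log 15 := (Real.lt_log_iff_exp_lt (by norm_num)).mpr he
    have hlog : Real.log 15 ≤ L := by
      rw [hL_def, ← hk_def]
      exact Real.log_le_log (by norm_num) harg
    linarith
  have hLpos : 0 < L := by linarith
  have hL2sq : 4 ≤ L^2 := by nlinarith
  set c : ℝ := eps1 / (2 * L^2) with hc_def
  have hcpos : 0 < c := by rw [hc_def]; positivity
  have hc1 : c ≤ 1 := by
    rw [hc_def, div_le_one (by positivity)]; nlinarith
  have hWx : (W.ncard : ℝ) ≤ eps1 * x / (4 * L^2) := hW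
  have hcardV : (Nat.card V : ℝ) = n := by exact_mod_cast congrArg Nat.cast hn
  have hsetn : ∀ X : Set V, (X.ncard : ℝ) ≤ n := by
    intro X
    have h := Set.ncard_le_ncard (Set.subset_univ X) (Set.toFinite _)
    rw [Set.ncard_univ] at h
    calc (X.ncard : ℝ) ≤ (Nat.card V : ℝ) := by exact_mod_cast h
      _ = n := hcardV
  -- the expansion step
  have hexpand : ∀ X : Set V, k/2 ≤ (X.ncard : ℝ) → (X.ncard : ℝ) ≤ (n:ℝ)/2 →
      x ≤ (X.ncard : ℝ) → c * X.ncard + W.ncard ≤ ((extNbr G X).ncard : ℝ) := by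
    intro X hXk hXn hXx
    have hXn2 : (X.ncard : ℝ) ≤ (Nat.card V : ℝ)/2 := by rw [hcardV]; exact hXn
    have havg : 0 ≤ avgDeg G :=
      div_nonneg (finsum_nonneg fun v => by positivity) (by positivity)
    have heps0 : 0 ≤ epsFun eps1 k (X.ncard : ℝ) := by
      rw [epsFun]; split
      · exact le_refl 0
      · positivity
    have h0 : (((⊥ : SimpleGraph V).edgeSet.ncard : ℝ)) ≤
        avgDeg G * epsFun eps1 k (X.ncard : ℝ) * X.ncard := by
      rw [SimpleGraph.edgeSet_bot, Set.ncard_empty]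
      push_cast
      exact mul_nonneg (mul_nonneg havg heps0) (by positivity)
    have hE := hExp X hXk hXn2 ⊥ bot_le h0
    rw [sdiff_bot] at hE
    have hXpos : (0:ℝ) < X.ncard := lt_of_lt_of_le (by positivity) hXk
    have hlog_pos : 0 < Real.log (15 * (X.ncard : ℝ) / k) :=
      Real.log_pos (by rw [lt_div_iff₀ hkpos]; nlinarith)
    have hlog_le : Real.log (15 * (X.ncard : ℝ) / k) ≤ L := by
      rw [hL_def, ← hk_def]
      apply Real.log_le_log (by positivity)
      gcongr
      exact_mod_cast hsetn X
    have hef : eps1 / L^2 ≤ epsFun eps1 k (X.ncard : ℝ) := by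
      rw [epsFun, if_neg (by push_neg; linarith)]
      rw [div_le_div_iff₀ (by positivity) (pow_pos hlog_pos 2)]
      nlinarith [pow_le_pow_left₀ hlog_pos.le hlog_le 2, heps1.le,
        pow_pos hlog_pos 2]
    have h1 : eps1 / L^2 * X.ncard ≤ ((extNbr G X).ncard : ℝ) :=
      le_trans (mul_le_mul_of_nonneg_right hef (by positivity)) hE
    have key : eps1 * x / (4*L^2) ≤ eps1 * X.ncard / (4*L^2) := by gcongr
    have h3 : (0:ℝ) ≤ eps1 * X.ncard / L^2 := by positivity
    have h2 : c * X.ncard + W.ncard ≤ eps1 / L^2 * X.ncard := by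
      calc c * X.ncard + W.ncard
          ≤ eps1/(2*L^2) * X.ncard + eps1 * X.ncard/(4*L^2) := by
            rw [hc_def]; linarith [hWx.trans key]
        _ = (3/4) * (eps1 * X.ncard / L^2) := by ring
        _ ≤ 1 * (eps1 * X.ncard / L^2) := by linarith
        _ = eps1 / L^2 * X.ncard := by ring
    linarith
  set T : ℕ := ⌈4 * L^3 / eps1⌉₊ with hT_def
  -- main growth argument, works for any starting set S
  have main : ∀ S : Set V, x ≤ (S.ncard : ℝ) → (∀ a ∈ S, a ∉ W) →
      (n:ℝ)/2 < ((ball G W S (1 + T)).ncard : ℝ) := by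
    intro S hxS hSW
    have hmonoS : ∀ i j : ℕ, i ≤ j → ((ball G W S i).ncard : ℝ) ≤ ((ball G W S j).ncard : ℝ) := by
      intro i j hij
      have : ball G W S i ⊆ ball G W S j := by
        induction j with
        | zero => rw [Nat.le_zero.mp hij]
        | succ j ihj =>
          rcases Nat.lt_or_ge i (j+1) with h | h
          · exact (ihj (by omega)).trans (ball_subset_succ G W S j)
          · rw [le_antisymm hij h]
      exact_mod_cast Set.ncard_le_ncard this (Set.toFinite _)
    have hxball : ∀ i, x ≤ ((ball G W S i).ncard : ℝ) := by
      intro i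
      calc x ≤ (S.ncard : ℝ) := hxS
        _ ≤ _ := by
          exact_mod_cast Set.ncard_le_ncard (subset_ball G W S i) (Set.toFinite _)
    -- step 1: |ball 1| ≥ k/2
    have hball1 : k/2 ≤ ((ball G W S 1).ncard : ℝ) := by
      by_cases hSk : k/2 ≤ (S.ncard : ℝ)
      · calc k/2 ≤ (S.ncard : ℝ) := hSk
          _ ≤ _ := by
            exact_mod_cast Set.ncard_le_ncard (subset_ball G W S 1) (Set.toFinite _)
      · push_neg at hSk
        have hSne : S.Nonempty := by
          apply Set.nonempty_of_ncard_ne_zero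
          intro h0
          rw [h0] at hxS; push_cast at hxS; linarith
        obtain ⟨v, hv⟩ := hSne
        have hsub : insert v (G.neighborSet v) \ W ⊆ ball G W S 1 := by
          intro w hw
          obtain ⟨hw1, hw2⟩ := hw
          rcases Set.mem_insert_iff.mp hw1 with h | h
          · rw [h]; exact subset_ball G W S 1 hv
          · exact Set.mem_union_right _ ⟨hw2, v, hv, h⟩
        have hins : ((insert v (G.neighborSet v)).ncard : ℝ) = (G.neighborSet v).ncard + 1 := by
          rw [Set.ncard_insert_of_notMem (by simp) (Set.toFinite _)]
          push_cast; ring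
        have hdeg := hMin v
        have hdiff : ((insert v (G.neighborSet v)).ncard : ℝ) - W.ncard ≤
            ((insert v (G.neighborSet v) \ W).ncard : ℝ) := by
          have hsub2 : insert v (G.neighborSet v) ⊆ (insert v (G.neighborSet v) \ W) ∪ W := by
            intro w hw
            by_cases hwW : w ∈ W
            · exact Set.mem_union_right _ hwW
            · exact Set.mem_union_left _ ⟨hw, hwW⟩
          have h6 := (Set.ncard_le_ncard hsub2 (Set.toFinite _)).trans
            (Set.ncard_union_le _ _)
          have h7 : ((insert v (G.neighborSet v)).ncard : ℝ) ≤
              ((insert v (G.neighborSet v) \ W).ncard : ℝ) + (W.ncard : ℝ) := by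
            exact_mod_cast h6
          linarith
        have hWd : (W.ncard : ℝ) ≤ d/32 := by
          have h16 : eps1 * x / (4 * L^2) ≤ x/16 := by
            apply div_le_div₀ (by positivity) (by nlinarith) (by norm_num) (by nlinarith)
          have hxd : x ≤ d/2 := by linarith [hxS.trans hSk.le, hkd]
          calc (W.ncard : ℝ) ≤ eps1 * x / (4 * L^2) := hWx
            _ ≤ x/16 := h16
            _ ≤ d/32 := by linarith
        have hbig : d - d/32 ≤ ((ball G W S 1).ncard : ℝ) := by
          have h5 : ((insert v (G.neighborSet v) \ W).ncard : ℝ) ≤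
              ((ball G W S 1).ncard : ℝ) := by
            exact_mod_cast Set.ncard_le_ncard hsub (Set.toFinite _)
          have : d ≤ ((insert v (G.neighborSet v)).ncard : ℝ) := by
            rw [hins]; linarith
          linarith
        linarith
    -- growth induction
    have hgrow : ∀ i : ℕ, (n:ℝ)/2 < ((ball G W S (1+i)).ncard : ℝ) ∨
        (1+c)^i * ((ball G W S 1).ncard : ℝ) ≤ ((ball G W S (1+i)).ncard : ℝ) := by
      intro i
      induction i with
      | zero => right; simp
      | succ i ih =>
        have hmono2 : ((ball G W S (1+i)).ncard : ℝ) ≤ ((ball G W S (1+(i+1))).ncard : ℝ) :=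
          hmonoS _ _ (by omega)
        rcases ih with h | h
        · left; linarith
        · by_cases hcase : (n:ℝ)/2 < ((ball G W S (1+i)).ncard : ℝ)
          · left; linarith
          · right
            push_neg at hcase
            have hone : (1:ℝ) ≤ (1+c)^i := one_le_pow₀ (by linarith)
            have hb1pos : (0:ℝ) ≤ ((ball G W S 1).ncard : ℝ) := by positivity
            have hk2 : k/2 ≤ ((ball G W S (1+i)).ncard : ℝ) := by nlinarith
            have hstep := hexpand (ball G W S (1+i)) hk2 hcase (hxball (1+i))
            have hcount := ncard_ball_succ G W S (1+i)
            have heq : (1:ℕ) + (i+1) = (1+i) + 1 := by omega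
            rw [heq]
            have hmul : (1+c)^(i+1) * ((ball G W S 1).ncard : ℝ) ≤
                (1+c) * ((ball G W S (1+i)).ncard : ℝ) := by
              have := mul_le_mul_of_nonneg_left h (by linarith : (0:ℝ) ≤ 1+c)
              calc (1+c)^(i+1) * ((ball G W S 1).ncard : ℝ)
                  = (1+c) * ((1+c)^i * ((ball G W S 1).ncard : ℝ)) := by ring
                _ ≤ (1+c) * ((ball G W S (1+i)).ncard : ℝ) := this
            nlinarith [hstep, hcount, hmul]
    -- conclude
    rcases hgrow T with h | h
    · exact h
    have hTge : 4 * L^3 / eps1 ≤ (T:ℝ) := Nat.le_ceil _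
    have hLeq : L = (4 * L^3 / eps1) * (c/2) := by
      rw [hc_def]; field_simp; ring
    have hTc : L ≤ (T:ℝ) * (c/2) := by
      rw [hLeq]
      exact mul_le_mul_of_nonneg_right hTge (by positivity)
    have hce : Real.exp (c/2) ≤ 1 + c := exp_half_le hcpos hc1
    have hpow : Real.exp L ≤ (1+c)^T := by
      calc Real.exp L ≤ Real.exp ((T:ℝ) * (c/2)) := Real.exp_le_exp.mpr hTc
        _ = (Real.exp (c/2))^T := Real.exp_nat_mul _ T
        _ ≤ (1+c)^T := pow_le_pow_left₀ (Real.exp_pos _).le hce T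
    have hexpL : Real.exp L = 15 * n / k := by
      rw [hL_def, ← hk_def]
      exact Real.exp_log (by positivity)
    have hprod : (15 * n / k) * (k/2) ≤ (1+c)^T * ((ball G W S 1).ncard : ℝ) := by
      apply mul_le_mul (hexpL ▸ hpow) hball1 (by positivity) (by positivity)
    have hid : (15 * (n:ℝ) / k) * (k/2) = 15 * n / 2 := by
      field_simp
    nlinarith [h, hprod]
  -- apply to A and B
  have hAW : ∀ a ∈ A, a ∉ W := fun a ha haW => (hWAB haW) (Or.inl ha)
  have hBW : ∀ b ∈ B, b ∉ W := fun b hb hbW => (hWAB hbW) (Or.inr hb)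
  have hballA := main A hA hAW
  have hballB := main B hB hBW
  -- the two balls intersect
  have hint : (ball G W A (1+T) ∩ ball G W B (1+T)).Nonempty := by
    by_contra hcon
    rw [Set.not_nonempty_iff_eq_empty] at hcon
    have hdisj : Disjoint (ball G W A (1+T)) (ball G W B (1+T)) :=
      Set.disjoint_iff_inter_eq_empty.mpr hcon
    have hun := Set.ncard_union_eq hdisj (Set.toFinite _) (Set.toFinite _)
    have hle := hsetn (ball G W A (1+T) ∪ ball G W B (1+T))
    rw [hun] at hle
    push_cast at hle
    linarith
  obtain ⟨u, huA, huB⟩ := hint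
  obtain ⟨a, ha, p, hpl, hps⟩ := ball_reach G W A hAW (1+T) u huA
  obtain ⟨b, hb, q, hql, hqs⟩ := ball_reach G W B hBW (1+T) u huB
  set r : G.Walk a b := p.append q.reverse with hr_def
  have hrlen : r.length ≤ 2*T + 2 := by
    rw [hr_def, SimpleGraph.Walk.length_append, SimpleGraph.Walk.length_reverse]
    omega
  have hrsup : ∀ y ∈ r.support, y ∉ W := by
    intro y hy
    rw [hr_def, SimpleGraph.Walk.mem_support_append_iff] at hy
    rcases hy with hy | hy
    · exact hps y hy
    · rw [SimpleGraph.Walk.support_reverse] at hy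
      exact hqs y (List.mem_reverse.mp hy)
  -- take a shortest good walk
  set Sl : Set ℕ := {ℓ | ∃ a' b' : V, ∃ w : G.Walk a' b', a' ∈ A ∧ b' ∈ B ∧
    (∀ y ∈ w.support, y ∉ W) ∧ w.length = ℓ} with hSl_def
  have hSne : Sl.Nonempty := ⟨r.length, a, b, r, ha, hb, hrsup, rfl⟩
  obtain ⟨a', b', w, ha', hb', hws, hwl⟩ := Nat.sInf_mem hSne
  have hbyp_s : ∀ y ∈ w.bypass.support, y ∉ W := fun y hy =>
    hws y (SimpleGraph.Walk.support_bypass_subset _ hy)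
  have hbyp_mem : w.bypass.length ∈ Sl := ⟨a', b', w.bypass, ha', hb', hbyp_s, rfl⟩
  have hbe : w.bypass.length = sInf Sl :=
    le_antisymm (hwl ▸ w.length_bypass_le) (Nat.sInf_le hbyp_mem)
  refine ⟨a', b', w.bypass, ha', hb', w.bypass_isPath, hbyp_s, ?_, ?_⟩
  · -- internal vertices
    intro y hy hyAB
    by_contra hcon
    push_neg at hcon
    obtain ⟨hya, hyb⟩ := hcon
    have hsplit := congrArg SimpleGraph.Walk.length (w.bypass.take_spec hy)
    rw [SimpleGraph.Walk.length_append] at hsplit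
    rcases hyAB with hyA | hyB
    · have hd_mem : (w.bypass.dropUntil y hy).length ∈ Sl :=
        ⟨y, b', w.bypass.dropUntil y hy, hyA, hb',
          fun z hz => hbyp_s z (SimpleGraph.Walk.support_dropUntil_subset _ hy hz), rfl⟩
      have hle := Nat.sInf_le hd_mem
      have htpos : 0 < (w.bypass.takeUntil y hy).length := by
        rcases Nat.eq_zero_or_pos (w.bypass.takeUntil y hy).length with h0 | hpos
        · exact absurd (SimpleGraph.Walk.eq_of_length_eq_zero h0).symm hya
        · exact hpos
      omega
    · have ht_mem : (w.bypass.takeUntil y hy).length ∈ Sl :=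
        ⟨a', y, w.bypass.takeUntil y hy, ha', hyB,
          fun z hz => hbyp_s z (SimpleGraph.Walk.support_takeUntil_subset _ hy hz), rfl⟩
      have hle := Nat.sInf_le ht_mem
      have hdpos : 0 < (w.bypass.dropUntil y hy).length := by
        rcases Nat.eq_zero_or_pos (w.bypass.dropUntil y hy).length with h0 | hpos
        · exact absurd (SimpleGraph.Walk.eq_of_length_eq_zero h0) hyb
        · exact hpos
      omega
  · -- length bound
    have hl0 : sInf Sl ≤ r.length := Nat.sInf_le ⟨a, b, r, ha, hb, hrsup, rfl⟩
    have hl1 : sInf Sl ≤ 2*T + 2 := hl0.trans hrlen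
    have hlr : (w.bypass.length : ℝ) ≤ 2*(T:ℝ) + 2 := by
      rw [hbe]; exact_mod_cast hl1
    have hTlt : (T:ℝ) < 4*(L^3/eps1) + 1 := by
      have h : (T:ℝ) < 4*L^3/eps1 + 1 := Nat.ceil_lt_add_one (by positivity)
      linarith [(by ring : 4*L^3/eps1 = 4*(L^3/eps1))]
    have hL3 : (8:ℝ) ≤ L^3 := by nlinarith
    have hM8 : (8:ℝ) ≤ L^3/eps1 := by
      rw [le_div_iff₀ heps1]; nlinarith
    have hgoal_eq : 100/eps1*L^3 = 100*(L^3/eps1) := by ring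
    rw [hgoal_eq]
    linarith
end

section
/- For each 0 < ε₁, ε₂ < 1 there exists d₀ = d₀(ε₁, ε₂) such that the following holds for every n ≥ d ≥ d₀. Let G be an n-vertex (ε₁, ε₂·d)-expander with minimum degree δ(G) ≥ d − 1, let W ⊆ V(G), and set m₀ := (40/ε₁)·log³(15n/(ε₂d)). If C ⊆ V(G)∖W satisfies |C| ≥ ε₂·d/2 and |W| ≤ ε(|C|, ε₁, ε₂d)·|C|/4, then |B^{m₀}_{G−W}(C)| > n/2. -/
open scoped BigOperators

/-- The ball of radius `r` around the set `C` in the graph `G - W`. -/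
def ballAvoid {V : Type*} (G : SimpleGraph V) (W C : Set V) (r : Real) : Set V :=
  {v : V | ∃ c ∈ C, ∃ p : G.Walk c v, (p.length : Real) ≤ r ∧ ∀ x ∈ p.support, x ∉ W}


lemma two_lt_log_sh : (2:ℝ) < Real.log (15/2) := by
  rw [Real.lt_log_iff_exp_lt (by norm_num)]
  have h := Real.exp_one_lt_d9
  have h2 : Real.exp 2 = Real.exp 1 * Real.exp 1 := by
    rw [← Real.exp_add]; norm_num
  nlinarith [Real.exp_pos 1]

lemma f_mono : MonotoneOn (fun t : ℝ => t / Real.log t ^ 2) (Set.Ici (15/2 : ℝ)) := by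
  have h0 : ∀ x ∈ Set.Ici (15/2:ℝ), Real.log x ≠ 0 := by
    intro x hx
    have : (2:ℝ) < Real.log x := lt_of_lt_of_le two_lt_log_sh
      (Real.log_le_log (by norm_num) hx)
    linarith
  have hsub : Set.Ici (15/2:ℝ) ⊆ {0}ᶜ := by
    intro x hx; simp only [Set.mem_Ici] at hx
    simp only [Set.mem_compl_iff, Set.mem_singleton_iff]; nlinarith
  apply (strictMonoOn_of_deriv_pos (convex_Ici _) ?_ ?_).monotoneOn
  · exact ContinuousOn.div continuousOn_id ((Real.continuousOn_log.mono hsub).pow 2)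
      (fun x hx => pow_ne_zero _ (h0 x hx))
  · intro x hx
    rw [interior_Ici] at hx
    have hx0 : (0:ℝ) < x := by simp only [Set.mem_Ioi] at hx; linarith
    have hlog : (2:ℝ) < Real.log x := lt_of_lt_of_le two_lt_log_sh
      (Real.log_le_log (by norm_num) (le_of_lt hx))
    have hd : HasDerivAt (fun t : ℝ => t / Real.log t ^ 2)
        ((1 * Real.log x ^ 2 - x * (↑2 * Real.log x ^ (2-1) * x⁻¹)) / (Real.log x ^ 2) ^ 2) x :=
      (hasDerivAt_id x).div ((Real.hasDerivAt_log hx0.ne').pow 2)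
        (pow_ne_zero _ (by linarith))
    rw [hd.deriv]
    have hln : (0:ℝ) < Real.log x := by linarith
    rw [div_pos_iff]
    left
    refine ⟨?_, by positivity⟩
    have h3 : x * (↑2 * Real.log x ^ (2-1) * x⁻¹) = 2 * Real.log x := by
      field_simp
      norm_num
    rw [h3]; nlinarith

lemma epsFun_nonneg (eps1 k x : ℝ) (h : 0 ≤ eps1) : 0 ≤ epsFun eps1 k x := by
  unfold epsFun; split <;> positivity

lemma epsmul_eq (eps1 k : ℝ) (hk : 0 < k) (x : ℝ) :
    eps1 / Real.log (15 * x / k) ^ 2 * x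
      = (eps1 * k / 15) * ((15 * x / k) / Real.log (15 * x / k) ^ 2) := by
  have h1 : eps1 * k / 15 * (15 * x / k) = eps1 * x := by
    field_simp
  rw [← mul_div_assoc, h1]; ring

lemma epsmul_mono (eps1 k : ℝ) (he : 0 ≤ eps1) (hk : 0 < k) {a b : ℝ}
    (ha : k/2 ≤ a) (hab : a ≤ b) :
    epsFun eps1 k a * a ≤ epsFun eps1 k b * b := by
  have hka : ¬ a < k/5 := by push_neg; linarith
  have hkb : ¬ b < k/5 := by push_neg; linarith
  unfold epsFun
  rw [if_neg hka, if_neg hkb]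
  have hta : (15/2 : ℝ) ≤ 15 * a / k := by
    rw [le_div_iff₀ hk]; nlinarith
  have htb : 15 * a / k ≤ 15 * b / k := by gcongr
  have hf := f_mono hta (Set.mem_Ici.2 (hta.trans htb)) htb
  simp only at hf
  rw [epsmul_eq eps1 k hk a, epsmul_eq eps1 k hk b]
  have : (0:ℝ) ≤ eps1 * k / 15 := by positivity
  exact mul_le_mul_of_nonneg_left hf this

lemma ballAvoid_mono {V : Type*} (G : SimpleGraph V) (W C : Set V) {r r' : ℝ}
    (h : r ≤ r') : ballAvoid G W C r ⊆ ballAvoid G W C r' := by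
  rintro v ⟨c, hc, p, hl, hs⟩
  exact ⟨c, hc, p, hl.trans h, hs⟩

set_option maxHeartbeats 1000000 in
theorem statement_5 (eps1 eps2 : Real)
    (heps1 : 0 < eps1) (heps1' : eps1 < 1) (heps2 : 0 < eps2) (heps2' : eps2 < 1) :
    ∃ d₀ : Real, ∀ (V : Type) [Fintype V] (G : SimpleGraph V) (n : Nat) (d : Real),
      Nat.card V = n → d₀ ≤ d → d ≤ (n : Real) →
      IsExpander G eps1 (eps2 * d) → minDegGe G (d - 1) →
      ∀ W C : Set V, C ∩ W = ∅ →
        eps2 * d / 2 ≤ (C.ncard : Real) →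
        (W.ncard : Real) ≤ epsFun eps1 (eps2 * d) (C.ncard) * (C.ncard : Real) / 4 →
        (n : Real) / 2 <
          ((ballAvoid G W C ((40 / eps1) * (Real.log (15 * n / (eps2 * d))) ^ 3)).ncard : Real) := by
  refine ⟨1, ?_⟩
  intro V _ G n d hn hd hdn hExp _hmin W C hCW hC hW
  set k := eps2 * d with hkdef
  set L := Real.log (15 * n / k) with hLdef
  have hdpos : (0:ℝ) < d := lt_of_lt_of_le one_pos hd
  have hkpos : 0 < k := mul_pos heps2 hdpos
  have hn1 : (1:ℝ) ≤ n := le_trans hd hdn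
  have hkn : k ≤ (n:ℝ) := by nlinarith
  have hnk1 : (1:ℝ) ≤ (n:ℝ) / k := (one_le_div hkpos).2 hkn
  have hargL : (15/2 : ℝ) ≤ 15 * n / k := by
    rw [le_div_iff₀ hkpos]; nlinarith
  have hL2 : (2:ℝ) < L := two_lt_log_sh.trans_le
    (Real.log_le_log (by norm_num) hargL)
  have hLpos : (0:ℝ) < L := by linarith
  set c : ℝ := 3 * eps1 / (4 * L^2) with hcdef
  have hc0 : 0 < c := div_pos (by linarith) (by nlinarith)
  have hc1 : c ≤ 1 := by
    rw [div_le_one (by nlinarith)]; nlinarith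
  clear_value k L c
  set B : ℕ → Set V := fun j => ballAvoid G W C (j : ℕ) with hBdef
  have hCnotW : ∀ x ∈ C, x ∉ W := by
    intro x hx hxW
    have : x ∈ C ∩ W := ⟨hx, hxW⟩
    rw [hCW] at this; exact this
  have hCB : ∀ j : ℕ, C ⊆ B j := by
    intro j x hx
    refine ⟨x, hx, SimpleGraph.Walk.nil, by simp, ?_⟩
    intro y hy
    simp only [SimpleGraph.Walk.support_nil, List.mem_singleton] at hy
    subst hy; exact hCnotW _ hx
  have hBmono : ∀ j : ℕ, B j ⊆ B (j+1) := by
    intro j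
    exact ballAvoid_mono G W C (by push_cast; linarith)
  have havg : 0 ≤ avgDeg G :=
    div_nonneg (finsum_nonneg fun v => Nat.cast_nonneg _) (Nat.cast_nonneg _)
  -- key expansion step
  have hstep : ∀ j : ℕ, ((B j).ncard : ℝ) ≤ (n:ℝ)/2 →
      (1 + c) * ((B j).ncard : ℝ) ≤ ((B (j+1)).ncard : ℝ) := by
    intro j hle
    set X := B j with hXdef
    have hCX : ((C.ncard : ℝ)) ≤ (X.ncard : ℝ) :=
      Nat.cast_le.2 (Set.ncard_le_ncard (hCB j) (Set.toFinite _))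
    have hXk : k/2 ≤ (X.ncard : ℝ) := hC.trans hCX
    have hXn : (X.ncard : ℝ) ≤ (n:ℝ) := by
      have h1 : X.ncard ≤ (Set.univ : Set V).ncard :=
        Set.ncard_le_ncard (Set.subset_univ _) (Set.toFinite _)
      rw [Set.ncard_univ, hn] at h1
      exact_mod_cast h1
    have hEf : 0 ≤ epsFun eps1 k (X.ncard) := epsFun_nonneg _ _ _ heps1.le
    have hexp := hExp X hXk (by rw [hn]; exact hle) ⊥ bot_le
      (by
        rw [SimpleGraph.edgeSet_bot]
        simp only [Set.ncard_empty, Nat.cast_zero]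
        exact mul_nonneg (mul_nonneg havg hEf) (Nat.cast_nonneg _))
    rw [sdiff_bot] at hexp
    -- epsFun lower bound
    have hnotlt : ¬ ((X.ncard : ℝ) < k/5) := by push_neg; linarith
    have hefval : epsFun eps1 k (X.ncard) = eps1 / Real.log (15 * X.ncard / k) ^ 2 := by
      unfold epsFun; rw [if_neg hnotlt]
    have hargX : (15/2 : ℝ) ≤ 15 * X.ncard / k := by
      rw [le_div_iff₀ hkpos]; nlinarith
    have hl2 : (2:ℝ) < Real.log (15 * X.ncard / k) :=
      two_lt_log_sh.trans_le (Real.log_le_log (by norm_num) hargX)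
    have hlL : Real.log (15 * X.ncard / k) ≤ L := by
      rw [hLdef]
      apply Real.log_le_log (lt_of_lt_of_le (by norm_num) hargX)
      gcongr
    have hEps : eps1 / L^2 ≤ epsFun eps1 k (X.ncard) := by
      have hsq : Real.log (15 * X.ncard / k) ^ 2 ≤ L ^ 2 := by nlinarith
      rw [hefval, div_le_div_iff₀ (by nlinarith) (by nlinarith)]
      exact mul_le_mul_of_nonneg_left hsq heps1.le
    -- W bound
    have hWX : (W.ncard : ℝ) ≤ epsFun eps1 k (X.ncard) * (X.ncard : ℝ) / 4 := by
      have := epsmul_mono eps1 k heps1.le hkpos hC hCX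
      linarith
    -- combinatorics
    have hsub : X ∪ (extNbr G X \ W) ⊆ B (j+1) := by
      rintro v (hv | ⟨⟨hvX, u, huX, hadj⟩, hvW⟩)
      · exact hBmono j hv
      · obtain ⟨c', hc', p, hpl, hps⟩ := huX
        refine ⟨c', hc', p.concat hadj, ?_, ?_⟩
        · rw [SimpleGraph.Walk.length_concat]; push_cast; linarith
        · intro x hx
          rw [SimpleGraph.Walk.support_concat,
            List.mem_append] at hx
          rcases hx with hx | hx
          · exact hps x hx
          · simp only [List.mem_singleton] at hx; subst hx; exact hvW
    have hdisj : Disjoint X (extNbr G X \ W) := by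
      rw [Set.disjoint_left]
      intro a ha h2
      exact h2.1.1 ha
    have h1 : (X.ncard : ℝ) + ((extNbr G X \ W).ncard : ℝ) ≤ ((B (j+1)).ncard : ℝ) := by
      have := Set.ncard_le_ncard hsub (Set.toFinite _)
      rw [Set.ncard_union_eq hdisj (Set.toFinite _) (Set.toFinite _)] at this
      exact_mod_cast this
    have h2 : ((extNbr G X).ncard : ℝ) ≤ ((extNbr G X \ W).ncard : ℝ) + (W.ncard : ℝ) := by
      have hsub2 : extNbr G X ⊆ (extNbr G X \ W) ∪ W := Set.subset_diff_union _ _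
      have := (Set.ncard_le_ncard hsub2 (Set.toFinite _)).trans
        (Set.ncard_union_le _ _)
      exact_mod_cast this
    have h4 : eps1 / L^2 * (X.ncard : ℝ) ≤ epsFun eps1 k (X.ncard) * (X.ncard : ℝ) :=
      mul_le_mul_of_nonneg_right hEps (Nat.cast_nonneg _)
    have hXnn : (0:ℝ) ≤ (X.ncard : ℝ) := Nat.cast_nonneg _
    have hexpand : (1 + c) * (X.ncard : ℝ)
        = (X.ncard : ℝ) + (3/4) * (eps1 / L^2 * (X.ncard : ℝ)) := by
      rw [hcdef]; ring
    rw [hexpand]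
    linarith
  -- induction
  have hP : ∀ j : ℕ, (n:ℝ)/2 < ((B j).ncard : ℝ) ∨
      (k/2) * (1+c)^j ≤ ((B j).ncard : ℝ) := by
    intro j
    induction j with
    | zero =>
      right
      simpa using hC.trans (Nat.cast_le.2 (Set.ncard_le_ncard (hCB 0) (Set.toFinite _)))
    | succ j ih =>
      have hmle : ((B j).ncard : ℝ) ≤ ((B (j+1)).ncard : ℝ) :=
        Nat.cast_le.2 (Set.ncard_le_ncard (hBmono j) (Set.toFinite _))
      rcases ih with h | h
      · exact Or.inl (h.trans_le hmle)
      · by_cases hhalf : ((B j).ncard : ℝ) ≤ (n:ℝ)/2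
        · right
          have hs := hstep j hhalf
          calc (k/2) * (1+c)^(j+1) = (1+c) * ((k/2) * (1+c)^j) := by ring
            _ ≤ (1+c) * ((B j).ncard : ℝ) :=
                mul_le_mul_of_nonneg_left h (by linarith)
            _ ≤ ((B (j+1)).ncard : ℝ) := hs
        · push_neg at hhalf
          exact Or.inl (hhalf.trans_le hmle)
  -- choose m
  set s : ℕ := ⌈8 * L^2 / (3 * eps1)⌉₊ with hsdef
  set t : ℕ := ⌈Real.logb 2 ((n:ℝ)/k)⌉₊ + 1 with htdef
  set m : ℕ := s * t with hmdef
  have hnkpos : (0:ℝ) < (n:ℝ)/k := by positivity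
  have hsc : (2:ℝ) ≤ (s:ℝ) * c := by
    have h1 : 8 * L^2 / (3 * eps1) ≤ (s:ℝ) := Nat.le_ceil _
    have h2 : (8 * L^2 / (3 * eps1)) * c = 2 := by
      rw [hcdef]; field_simp; ring
    nlinarith
  have hpow_s : (2:ℝ) ≤ (1+c)^s := by
    have := one_add_mul_le_pow (a := c) (by linarith) s
    linarith
  have h2t : 2 * ((n:ℝ)/k) ≤ 2^t := by
    have h1 : Real.logb 2 ((n:ℝ)/k) + 1 ≤ (t:ℝ) := by
      have := Nat.le_ceil (Real.logb 2 ((n:ℝ)/k))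
      rw [htdef]; push_cast; linarith
    have h2 : (2:ℝ)^(t:ℕ) = (2:ℝ)^((t:ℕ):ℝ) := (Real.rpow_natCast 2 t).symm
    rw [h2]
    calc 2 * ((n:ℝ)/k) = (2:ℝ)^(Real.logb 2 ((n:ℝ)/k) + 1) := by
          rw [Real.rpow_add (by norm_num), Real.rpow_one,
            Real.rpow_logb (by norm_num) (by norm_num) hnkpos]; ring
      _ ≤ (2:ℝ)^((t:ℕ):ℝ) := Real.rpow_le_rpow_of_exponent_le (by norm_num) h1
  have hpowm : 2 * ((n:ℝ)/k) ≤ (1+c)^m := by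
    calc 2 * ((n:ℝ)/k) ≤ 2^t := h2t
      _ ≤ ((1+c)^s)^t := pow_le_pow_left₀ (by norm_num) hpow_s t
      _ = (1+c)^m := by rw [hmdef, pow_mul]
  have hfinal : (n:ℝ)/2 < ((B m).ncard : ℝ) := by
    rcases hP m with h | h
    · exact h
    · have hkey : (n:ℝ) ≤ (k/2) * (1+c)^m := by
        have h1 : (k/2) * (2 * ((n:ℝ)/k)) = n := by field_simp
        nlinarith
      linarith
  -- m ≤ 40/eps1 * L^3
  have hs_le : (s:ℝ) ≤ 3 * L^2 / eps1 := by
    have h1 : (s:ℝ) < 8 * L^2 / (3 * eps1) + 1 := Nat.ceil_lt_add_one (by positivity)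
    have h2 : 8 * L^2 / (3 * eps1) * eps1 = 8 * L^2 / 3 := by field_simp
    rw [le_div_iff₀ heps1]
    nlinarith [mul_lt_mul_of_pos_right h1 heps1]
  have ht_le : (t:ℝ) ≤ 5/2 * L := by
    have hlb0 : 0 ≤ Real.logb 2 ((n:ℝ)/k) := Real.logb_nonneg (by norm_num) hnk1
    have h1 : (t:ℝ) ≤ Real.logb 2 ((n:ℝ)/k) + 2 := by
      have := Nat.ceil_lt_add_one hlb0
      rw [htdef]; push_cast; linarith
    have h2 : Real.log ((n:ℝ)/k) ≤ L := by
      rw [hLdef]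
      apply Real.log_le_log hnkpos
      rw [div_le_div_iff₀ hkpos hkpos]; nlinarith
    have h3 : Real.logb 2 ((n:ℝ)/k) = Real.log ((n:ℝ)/k) / Real.log 2 := rfl
    have hl2 := Real.log_two_gt_d9
    have hlog2pos : (0:ℝ) < Real.log 2 := by linarith
    have h4 : Real.logb 2 ((n:ℝ)/k) ≤ L / Real.log 2 := by
      rw [h3]; gcongr
    have h5 : L / Real.log 2 ≤ 3/2 * L := by
      rw [div_le_iff₀ hlog2pos]; nlinarith
    linarith
  have hm_le : (m:ℝ) ≤ 40 / eps1 * L^3 := by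
    have hmst : (m:ℝ) = (s:ℝ) * (t:ℝ) := by rw [hmdef]; push_cast; ring
    have hs0 : (0:ℝ) ≤ (s:ℝ) := Nat.cast_nonneg _
    have ht0 : (0:ℝ) ≤ (t:ℝ) := Nat.cast_nonneg _
    have h1 : (s:ℝ) * (t:ℝ) ≤ (3 * L^2 / eps1) * (5/2 * L) :=
      mul_le_mul hs_le ht_le ht0 (by positivity)
    have h2 : (3 * L^2 / eps1) * (5/2 * L) ≤ 40 / eps1 * L^3 := by
      have hpos : (0:ℝ) ≤ L^3 / eps1 := div_nonneg (pow_pos hLpos 3).le heps1.le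
      have hring : 40 / eps1 * L^3 - (3 * L^2 / eps1) * (5/2 * L)
          = (65/2) * (L^3 / eps1) := by ring
      linarith
    linarith [hmst ▸ h1.trans h2]
  -- conclude
  have hsubfin : B m ⊆ ballAvoid G W C ((40 / eps1) * L ^ 3) :=
    ballAvoid_mono G W C hm_le
  exact hfinal.trans_le
    (by exact_mod_cast Set.ncard_le_ncard hsubfin (Set.toFinite _))
end
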